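/- Let Σ_a, Σ_b ⊆ M be closed acausal sets (no two distinct points related by ≼) with D(Σ_a) = D(Σ_b) = M and Σ_b ⊆ Σ_a ∪ I⁺(Σ_a). Let a ⊆ Σ_a be open in the subspace topology of Σ_a, set a' = Σ_a \ (a ∪ edge(a)), R = J⁺(Σ_a) ∩ J⁻(Σ_b), N = ∂I⁺(a) ∩ R, and b' = Σ_b ∩ D⁺(a' ∪ edge(a)). Then D(b' ∪ N) = M; that is, b' ∪ N is a Cauchy slice. (A step in the proof of the paper's main Theorem, showing the hybrid surface Σ = b' ∪ N is a Cauchy slice.) -/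
import Mathlib


open Set Metric

noncomputable section

/-- Spatial Euclidean factor. -/
abbrev E (n : ℕ) : Type := EuclideanSpace ℝ (Fin n)

/-- Minkowski spacetime `M = ℝ × E`. -/
abbrev M (n : ℕ) : Type := ℝ × E n

variable {n : ℕ}

/-- Chronological relation `p ≪ q`. -/
def chron (p q : M n) : Prop := dist p.2 q.2 < q.1 - p.1

/-- Causal relation `p ≼ q`. -/
def causal (p q : M n) : Prop := dist p.2 q.2 ≤ q.1 - p.1

/-- Chronological future `I⁺(S)`. -/
def Iplus (S : Set (M n)) : Set (M n) := {q | ∃ p ∈ S, chron p q}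

/-- Chronological past `I⁻(S)`. -/
def Iminus (S : Set (M n)) : Set (M n) := {q | ∃ p ∈ S, chron q p}

/-- `I(S) = I⁺(S) ∪ I⁻(S)`. -/
def Iboth (S : Set (M n)) : Set (M n) := Iplus S ∪ Iminus S

/-- Causal future `J⁺(S)`. -/
def Jplus (S : Set (M n)) : Set (M n) := {q | ∃ p ∈ S, causal p q}

/-- Causal past `J⁻(S)`. -/
def Jminus (S : Set (M n)) : Set (M n) := {q | ∃ p ∈ S, causal q p}

/-- A set is achronal if no two of its points are chronologically related. -/
def Achronal (S : Set (M n)) : Prop := ∀ p ∈ S, ∀ q ∈ S, ¬ chron p q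

/-- A set is acausal if no two distinct points of it are causally related. -/
def Acausal (S : Set (M n)) : Prop := ∀ p ∈ S, ∀ q ∈ S, p ≠ q → ¬ causal p q

/-- `edge(a)`: points `p ∈ closure a` such that every open neighborhood `O` of `p`
contains `q, r` with `r ≪ p ≪ q` together with a continuous timelike curve in `O`
from `r` to `q` avoiding `a`. -/
def edge (a : Set (M n)) : Set (M n) :=
  {p | p ∈ closure a ∧ ∀ O : Set (M n), IsOpen O → p ∈ O →
    ∃ q ∈ O, ∃ r ∈ O, chron r p ∧ chron p q ∧
      ∃ γ : ℝ → M n, ContinuousOn γ (Icc 0 1) ∧ γ 0 = r ∧ γ 1 = q ∧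
        (∀ s ∈ Icc (0:ℝ) 1, γ s ∈ O ∧ γ s ∉ a) ∧
        (∀ s ∈ Icc (0:ℝ) 1, ∀ t ∈ Icc (0:ℝ) 1, s < t → chron (γ s) (γ t))}

/-- A slice: a closed achronal set with empty edge. -/
def IsSlice (Sg : Set (M n)) : Prop := IsClosed Sg ∧ Achronal Sg ∧ edge Sg = ∅

/-- A hypersurface in the slice `Sg`: a subset open in the subspace topology of `Sg`. -/
def IsHypersurfaceIn (Sg a : Set (M n)) : Prop :=
  a ⊆ Sg ∧ IsOpen ((Subtype.val : Sg → M n) ⁻¹' a)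

/-- A hypersurface: subset of some slice, open in the slice's subspace topology. -/
def IsHypersurface (a : Set (M n)) : Prop := ∃ Sg, IsSlice Sg ∧ IsHypersurfaceIn Sg a

/-- The frontier (boundary) of `a` in the subspace topology of `Sg`,
viewed as a subset of spacetime. -/
def frontierIn (Sg a : Set (M n)) : Set (M n) :=
  (Subtype.val : Sg → M n) '' frontier ((Subtype.val : Sg → M n) ⁻¹' a)

/-- A future-infinite causal worldline: the graph `{(t, x t) : t ≥ t₀}` of a
1-Lipschitz map defined on `[t₀, ∞)`. -/
def IsWorldline (W : Set (M n)) : Prop :=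
  ∃ t₀ : ℝ, ∃ x : ℝ → E n, LipschitzOnWith 1 x (Ici t₀) ∧
    W = {p : M n | t₀ ≤ p.1 ∧ p.2 = x p.1}

/-- Domain of dependence `D(S)`: points through which every inextendible causal
curve (graph of a 1-Lipschitz map `ℝ → E`) meets `S`. -/
def Dom (S : Set (M n)) : Set (M n) :=
  {p | ∀ x : ℝ → E n, LipschitzWith 1 x → x p.1 = p.2 → ∃ t : ℝ, (t, x t) ∈ S}

/-- Future domain of dependence `D⁺(S)`: every inextendible causal curve through `p`
meets `S` at some time `t ≤ p.1`. -/
def DomPlus (S : Set (M n)) : Set (M n) :=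
  {p | ∀ x : ℝ → E n, LipschitzWith 1 x → x p.1 = p.2 →
    ∃ t : ℝ, t ≤ p.1 ∧ (t, x t) ∈ S}

/-- A `C¹` function has timelike gradient if at every point `∂T/∂t > ‖∇_E T‖`. -/
def TimelikeGrad (T : M n → ℝ) : Prop :=
  ∀ p : M n,
    ‖(fderiv ℝ T p).comp (ContinuousLinearMap.inr ℝ ℝ (E n))‖ <
      fderiv ℝ T p ((1 : ℝ), (0 : E n))

/-- A past directed outward null deformation of the hypersurface `a` within the
open set `O`. -/
def IsPastOutwardNullDeformation (a O b : Set (M n)) : Prop :=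
  IsHypersurface b ∧ Dom a ⊆ Dom b ∧ b ⊆ closure (Iminus a) ∧
  symmDiff a b ⊆ O ∧ edge b ⊆ edge a ∪ ((frontier (Iminus a) \ a) ∩ O)



lemma chron_lt {p q : M n} (h : chron p q) : p.1 < q.1 := by
  have := dist_nonneg (x := p.2) (y := q.2); unfold chron at h; linarith

lemma causal_refl' (p : M n) : causal p p := by simp [causal]

lemma chron_causal {p q : M n} (h : chron p q) : causal p q := le_of_lt h

lemma chron_trans_causal {p q r : M n} (h1 : chron p q) (h2 : causal q r) : chron p r := by
  have := dist_triangle p.2 q.2 r.2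
  unfold chron causal at *; linarith

lemma curve_causal {x : ℝ → E n} (hx : LipschitzWith 1 x) {s t : ℝ} (h : s ≤ t) :
    causal (s, x s) (t, x t) := by
  unfold causal
  calc dist (x s) (x t) ≤ dist s t := by simpa using hx.dist_le_mul s t
  _ = (t, x t).1 - (s, x s).1 := by
      rw [Real.dist_eq, abs_of_nonpos (by linarith)]; simp

lemma isOpen_Iplus (S : Set (M n)) : IsOpen (Iplus S) := by
  have h : Iplus S = ⋃ p ∈ S, {q : M n | dist p.2 q.2 < q.1 - p.1} := by
    ext q; simp [Iplus, chron]
  rw [h]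
  exact isOpen_biUnion fun p _ =>
    isOpen_lt (continuous_const.dist continuous_snd)
      (continuous_fst.sub continuous_const)

lemma mem_closure_Iplus {a : Set (M n)} {q p : M n} (hq : q ∈ a) (h : causal q p) :
    p ∈ closure (Iplus a) := by
  rw [Metric.mem_closure_iff]
  intro ε hε
  refine ⟨(p.1 + ε/2, p.2), ⟨q, hq, ?_⟩, ?_⟩
  · unfold causal at h; unfold chron; simp only; linarith
  · rw [Prod.dist_eq]
    simp only [dist_self, Real.dist_eq]
    rw [abs_of_nonpos (by linarith)]
    simp only [max_eq_left (by linarith : (0:ℝ) ≤ -(p.1 - (p.1 + ε/2)))]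
    linarith

/-- The hybrid surface `b' ∪ N` is a Cauchy slice:
`D(b' ∪ N) = M`. -/
theorem stmt14 {n : ℕ} (hn : 0 < n) (Sa Sb a : Set (M n))
    (hSa : IsClosed Sa) (hSaA : Acausal Sa)
    (hSb : IsClosed Sb) (hSbA : Acausal Sb)
    (hDa : Dom Sa = univ) (hDb : Dom Sb = univ)
    (hfut : Sb ⊆ Sa ∪ Iplus Sa)
    (haSub : a ⊆ Sa) (haOpen : IsOpen ((Subtype.val : Sa → M n) ⁻¹' a)) :
    Dom
      ((Sb ∩ DomPlus ((Sa \ (a ∪ edge a)) ∪ edge a)) ∪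
        (frontier (Iplus a) ∩ (Jplus Sa ∩ Jminus Sb))) = univ := by
  ext p
  simp only [mem_univ, iff_true, Dom, mem_setOf_eq]
  intro x hx hxp
  clear hxp
  have hbmem : (p.1, x p.1) ∈ Dom Sb := by rw [hDb]; trivial
  obtain ⟨tb, htb⟩ := hbmem x hx rfl
  by_cases hPb : (tb, x tb) ∈ Iplus a
  · -- Pb ∈ I⁺(a): find the frontier crossing on the curve x
    have hamem : (p.1, x p.1) ∈ Dom Sa := by rw [hDa]; trivial
    obtain ⟨ta, hta⟩ := hamem x hx rfl
    set T : Set ℝ := {t | (t, x t) ∈ Iplus a} with hTdef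
    have hcont : Continuous (fun t : ℝ => ((t, x t) : M n)) :=
      continuous_id.prodMk hx.continuous
    have hTopen : IsOpen T := (isOpen_Iplus a).preimage hcont
    have hTsub : ∀ t ∈ T, ta < t := by
      intro t ht
      by_contra hle
      push_neg at hle
      obtain ⟨q, hq, hchr⟩ := ht
      have h2 : chron q (ta, x ta) := chron_trans_causal hchr (curve_causal hx hle)
      have hne : q ≠ (ta, x ta) := by
        intro h; rw [h] at h2; exact absurd (chron_lt h2) (lt_irrefl _)
      exact hSaA q (haSub hq) _ hta hne (chron_causal h2)
    have hTne : T.Nonempty := ⟨tb, hPb⟩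
    have hTbdd : BddBelow T := ⟨ta, fun t ht => (hTsub t ht).le⟩
    set t0 : ℝ := sInf T with ht0
    have ht0tb : t0 ≤ tb := csInf_le hTbdd hPb
    have hta0 : ta ≤ t0 := le_csInf hTne (fun t ht => (hTsub t ht).le)
    have hcl : (t0, x t0) ∈ closure (Iplus a) := by
      rw [Metric.mem_closure_iff]
      intro ε hε
      obtain ⟨t, htT, htlt⟩ := Real.lt_sInf_add_pos hTne hε
      refine ⟨(t, x t), htT, ?_⟩
      have h1 : |t0 - t| < ε := by
        rw [abs_of_nonpos (by linarith [csInf_le hTbdd htT])]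
        linarith [csInf_le hTbdd htT]
      rw [Prod.dist_eq]
      refine max_lt (by rwa [Real.dist_eq]) (lt_of_le_of_lt ?_ h1)
      calc dist (x t0) (x t) ≤ dist t0 t := by simpa using hx.dist_le_mul t0 t
      _ = |t0 - t| := Real.dist_eq _ _
    have hnotin : (t0, x t0) ∉ Iplus a := by
      intro hmem
      have ht0T : t0 ∈ T := hmem
      obtain ⟨ε, hε, hball⟩ := Metric.isOpen_iff.1 hTopen t0 ht0T
      have : t0 - ε/2 ∈ T := hball (by
        simp only [Metric.mem_ball, Real.dist_eq]
        rw [abs_of_nonpos (by linarith)]; linarith)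
      have := csInf_le hTbdd this
      linarith
    refine ⟨t0, Or.inr ⟨?_, ⟨(ta, x ta), hta, curve_causal hx hta0⟩,
      ⟨(tb, x tb), htb, curve_causal hx ht0tb⟩⟩⟩
    rw [(isOpen_Iplus a).frontier_eq]
    exact ⟨hcl, hnotin⟩
  · by_cases hdp : (tb, x tb) ∈ DomPlus ((Sa \ (a ∪ edge a)) ∪ edge a)
    · exact ⟨tb, Or.inl ⟨htb, hdp⟩⟩
    · simp only [DomPlus, mem_setOf_eq] at hdp
      push_neg at hdp
      obtain ⟨y, hy, hytb, hyavoid⟩ := hdp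
      have hamem : (tb, y tb) ∈ Dom Sa := by rw [hDa]; trivial
      obtain ⟨s, hs⟩ := hamem y hy rfl
      have hstb : s ≤ tb := by
        by_contra hgt
        push_neg at hgt
        have hc : causal (tb, x tb) (s, y s) := by
          have := curve_causal hy hgt.le
          rwa [hytb] at this
        rcases hfut htb with hin | ⟨q, hq, hchr⟩
        · refine hSaA _ hin _ hs ?_ hc
          intro h
          have := congrArg Prod.fst h
          simp only at this
          linarith
        · have h2 := chron_trans_causal hchr hc
          have hne : q ≠ (s, y s) := by
            intro h; rw [h] at h2; exact absurd (chron_lt h2) (lt_irrefl _)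
          exact hSaA q hq _ hs hne (chron_causal h2)
      have hmem := hyavoid s hstb
      have hsa : (s, y s) ∈ a := by
        by_contra hna
        apply hmem
        by_cases he : (s, y s) ∈ edge a
        · exact Or.inr he
        · exact Or.inl ⟨hs, fun h => h.elim hna he⟩
      have hQPb : causal (s, y s) (tb, x tb) := by
        have := curve_causal hy hstb
        rwa [hytb] at this
      refine ⟨tb, Or.inr ⟨?_, ⟨(s, y s), haSub hsa, hQPb⟩,
        ⟨(tb, x tb), htb, causal_refl' _⟩⟩⟩
      rw [(isOpen_Iplus a).frontier_eq]
      exact ⟨mem_closure_Iplus hsa hQPb, hPb⟩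


end
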